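/- arXiv:1303.1643 — 2 statements merged into one kernel-verified Lean document; each statement's English description precedes it below -/
import Mathlib

section
/- A finite graph G is an interval graph if and only if the clique matrix of G has the consecutive ones property. -/
/-- A binary matrix (rows `R`, columns `Fin n`, entries in `Bool`) has the
consecutive ones property: some permutation of the columns makes the ones in
every row consecutive. -/
def HasCOP {R : Type*} {n : ℕ} (M : R → Fin n → Bool) : Prop :=
  ∃ σ : Equiv.Perm (Fin n), ∀ (i : R) (a b c : Fin n), a ≤ b → b ≤ c →
    M i (σ a) = true → M i (σ c) = true → M i (σ b) = true

/-- The set `S_i` of columns having a `1` in row `i`. -/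
def rowSet {R : Type*} {n : ℕ} (M : R → Fin n → Bool) (i : R) : Set (Fin n) :=
  {j | M i j = true}

/-- The set `S_i` of columns having a `1` in row `i`, as a `Finset`. -/
def rowFinset {R : Type*} {n : ℕ} (M : R → Fin n → Bool) (i : R) : Finset (Fin n) :=
  Finset.univ.filter (fun j => M i j = true)

/-- `vert(c_k)`: vertices (rows) having a `1` in column `k`. -/
def vert {R : Type*} {n : ℕ} (M : R → Fin n → Bool) (k : Fin n) : Set R :=
  {i | M i k = true}

/-- The submatrix `M \ D` obtained by deleting the rows in `D`. -/
def delRows {R : Type*} {n : ℕ} (M : R → Fin n → Bool) (D : Set R) :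
    {i : R // i ∉ D} → Fin n → Bool :=
  fun i j => M i.1 j

/-- `M̃`: the `(n+m) × n` matrix obtained by stacking the `n × n` identity
matrix on top of `M`. -/
def augMatrix {m n : ℕ} (M : Fin m → Fin n → Bool) : Fin (n + m) → Fin n → Bool :=
  fun i j => Fin.addCases (fun i' : Fin n => decide (i' = j)) (fun i' : Fin m => M i' j) i

/-- The derived graph `G(M)`: one vertex per row, two distinct rows adjacent
iff some column has a `1` in both. -/
def derivedGraph {R : Type*} {n : ℕ} (M : R → Fin n → Bool) : SimpleGraph R where
  Adj i j := i ≠ j ∧ ∃ k, M i k = true ∧ M j k = true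
  symm := by
    refine ⟨?_⟩
    rintro i j ⟨hne, k, h1, h2⟩
    exact ⟨hne.symm, k, h2, h1⟩
  loopless := by refine ⟨?_⟩; rintro i ⟨h, -⟩; exact h rfl

/-- An interval graph: vertices can be assigned nonempty real intervals so
that distinct vertices are adjacent iff their intervals intersect. -/
def IsIntervalGraph {V : Type*} (G : SimpleGraph V) : Prop :=
  ∃ I : V → Set ℝ, (∀ v, (I v).Nonempty ∧ (I v).OrdConnected) ∧
    ∀ u v : V, u ≠ v → (G.Adj u v ↔ (I u ∩ I v).Nonempty)

/-- A maximal clique: a clique not properly contained in another clique. -/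
def IsMaximalClique {V : Type*} (G : SimpleGraph V) (Q : Set V) : Prop :=
  G.IsClique Q ∧ ∀ Q' : Set V, G.IsClique Q' → Q ⊆ Q' → Q' = Q

/-- A maximal clique of the induced subgraph `G[X]` (viewed as a set of
vertices of `G` contained in `X`). -/
def IsMaximalCliqueOn {V : Type*} (G : SimpleGraph V) (X Q : Set V) : Prop :=
  Q ⊆ X ∧ G.IsClique Q ∧ ∀ Q' : Set V, Q' ⊆ X → G.IsClique Q' → Q ⊆ Q' → Q' = Q

/-- `N` is the clique matrix of `G`: its columns are pairwise distinct and the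
column sets are exactly the maximal cliques of `G`. -/
def IsCliqueMatrix {V C : Type*} (G : SimpleGraph V) (N : V → C → Bool) : Prop :=
  Function.Injective (fun j : C => fun i : V => N i j) ∧
  ∀ Q : Set V, IsMaximalClique G Q ↔ ∃ j : C, Q = {i | N i j = true}

/-- An intersection cardinality preserving interval assignment: each row set
`S_i` gets an integer interval `[a i, b i]` with `|S_i ∩ S_j| = |I_i ∩ I_j|`
for all pairs `i, j`. -/
def IsICPIA {m n : ℕ} (M : Fin m → Fin n → Bool) (a b : Fin m → ℤ) : Prop :=
  ∀ i j : Fin m,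
    (rowFinset M i ∩ rowFinset M j).card =
    (Finset.Icc (a i) (b i) ∩ Finset.Icc (a j) (b j)).card

/-- `c` is an induced cycle of length `l` inside the induced subgraph `G[X]`:
`l ≥ 3` distinct vertices of `X`, cyclically consecutive ones adjacent, and
non-consecutive ones non-adjacent. -/
def IsInducedCycleOn {V : Type*} (G : SimpleGraph V) (X : Set V) (l : ℕ) (c : Fin l → V) : Prop :=
  3 ≤ l ∧ Function.Injective c ∧ (∀ i, c i ∈ X) ∧
  ∀ i j : Fin l, i ≠ j →
    (G.Adj (c i) (c j) ↔ (j.val = (i.val + 1) % l ∨ i.val = (j.val + 1) % l))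

/-- `G` has an induced cycle of length 4. -/
def HasInducedC4 {V : Type*} (G : SimpleGraph V) : Prop :=
  ∃ v1 v2 v3 v4 : V, v1 ≠ v2 ∧ v1 ≠ v3 ∧ v1 ≠ v4 ∧ v2 ≠ v3 ∧ v2 ≠ v4 ∧ v3 ≠ v4 ∧
    G.Adj v1 v2 ∧ G.Adj v2 v3 ∧ G.Adj v3 v4 ∧ G.Adj v4 v1 ∧ ¬ G.Adj v1 v3 ∧ ¬ G.Adj v2 v4

/-- A comparability graph: some partial order on the vertices makes distinct
vertices adjacent iff they are comparable. -/
def IsComparabilityGraph {V : Type*} (G : SimpleGraph V) : Prop :=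
  ∃ p : PartialOrder V, ∀ u v : V, u ≠ v → (G.Adj u v ↔ (p.le u v ∨ p.le v u))

/-- Membership in an order-connected set from two members bracketing a point. -/
lemma ordConnected_mem_of_between {A : Set ℝ} (hA : A.OrdConnected) {x y z : ℝ}
    (hx : x ∈ A) (hy : y ∈ A) (h1 : min x y ≤ z) (h2 : z ≤ max x y) : z ∈ A := by
  rcases le_total x y with h | h
  · rw [min_eq_left h] at h1; rw [max_eq_right h] at h2
    exact hA.out hx hy ⟨h1, h2⟩
  · rw [min_eq_right h] at h1; rw [max_eq_left h] at h2
    exact hA.out hy hx ⟨h1, h2⟩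

/-- The median of three points witnesses the triple intersection of three
pairwise-intersecting order-connected subsets of `ℝ`. -/
lemma three_ordConnected_inter {A B C : Set ℝ} (hA : A.OrdConnected)
    (hB : B.OrdConnected) (hC : C.OrdConnected)
    {p q r : ℝ} (hpA : p ∈ A) (hpB : p ∈ B) (hqA : q ∈ A) (hqC : q ∈ C)
    (hrB : r ∈ B) (hrC : r ∈ C) : ∃ x, x ∈ A ∧ x ∈ B ∧ x ∈ C := by
  refine ⟨max (min p q) (max (min p r) (min q r)), ?_, ?_, ?_⟩
  · refine ordConnected_mem_of_between hA hpA hqA (le_max_left _ _) ?_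
    refine max_le ?_ (max_le ?_ ?_)
    · exact le_max_of_le_left (min_le_left _ _)
    · exact le_max_of_le_left (min_le_left _ _)
    · exact le_max_of_le_right (min_le_left _ _)
  · refine ordConnected_mem_of_between hB hpB hrB ?_ ?_
    · exact le_max_of_le_right (le_max_left _ _)
    · refine max_le ?_ (max_le ?_ ?_)
      · exact le_max_of_le_left (min_le_left _ _)
      · exact le_max_of_le_left (min_le_left _ _)
      · exact le_max_of_le_right (min_le_right _ _)
  · refine ordConnected_mem_of_between hC hqC hrC ?_ ?_
    · exact le_max_of_le_right (le_max_right _ _)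
    · refine max_le ?_ (max_le ?_ ?_)
      · exact le_max_of_le_left (min_le_right _ _)
      · exact le_max_of_le_right (min_le_right _ _)
      · exact le_max_of_le_right (min_le_right _ _)

/-- Helly property for finite families of order-connected subsets of `ℝ`. -/
lemma helly_aux {ι : Type*} (I : ι → Set ℝ) (s : Finset ι) :
    (∀ v ∈ s, (I v).OrdConnected) →
    (∀ u ∈ s, ∀ v ∈ s, (I u ∩ I v).Nonempty) →
    ∀ T : Set ℝ, T.OrdConnected → T.Nonempty → (∀ v ∈ s, (T ∩ I v).Nonempty) →
    ∃ x ∈ T, ∀ v ∈ s, x ∈ I v := by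
  induction s using Finset.cons_induction with
  | empty =>
    intro _ _ T _ hTne _
    obtain ⟨x, hx⟩ := hTne
    exact ⟨x, hx, by simp⟩
  | cons a s ha ih =>
    intro hI hpair T hT hTne hTI
    have hIa : (I a).OrdConnected := hI a (Finset.mem_cons_self a s)
    have hT' : (T ∩ I a).OrdConnected := hT.inter hIa
    have hT'ne : (T ∩ I a).Nonempty := hTI a (Finset.mem_cons_self a s)
    have key : ∀ v ∈ s, ((T ∩ I a) ∩ I v).Nonempty := by
      intro v hv
      have hvs : v ∈ Finset.cons a s ha := Finset.mem_cons_of_mem hv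
      obtain ⟨p, hpT, hpa⟩ := hTI a (Finset.mem_cons_self a s)
      obtain ⟨q, hqT, hqv⟩ := hTI v hvs
      obtain ⟨r, hra, hrv⟩ := hpair a (Finset.mem_cons_self a s) v hvs
      obtain ⟨x, hxT, hxa, hxv⟩ :=
        three_ordConnected_inter hT hIa (hI v hvs) hpT hpa hqT hqv hra hrv
      exact ⟨x, ⟨hxT, hxa⟩, hxv⟩
    obtain ⟨x, hx, hxs⟩ :=
      ih (fun v hv => hI v (Finset.mem_cons_of_mem hv))
        (fun u hu v hv => hpair u (Finset.mem_cons_of_mem hu) v (Finset.mem_cons_of_mem hv))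
        (T ∩ I a) hT' hT'ne key
    refine ⟨x, hx.1, ?_⟩
    intro v hv
    rcases Finset.mem_cons.mp hv with rfl | h
    · exact hx.2
    · exact hxs v h

/-- Every clique of a finite graph is contained in a maximal clique. -/
lemma exists_maximal_clique {m : ℕ} (G : SimpleGraph (Fin m)) {s : Set (Fin m)}
    (hs : G.IsClique s) : ∃ Q, IsMaximalClique G Q ∧ s ⊆ Q := by
  have hfin : {Q : Set (Fin m) | G.IsClique Q ∧ s ⊆ Q}.Finite := Set.toFinite _
  have hne : {Q : Set (Fin m) | G.IsClique Q ∧ s ⊆ Q}.Nonempty := ⟨s, hs, subset_rfl⟩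
  obtain ⟨Q, hQ, hmax⟩ := Set.Finite.exists_maximalFor Set.ncard _ hfin hne
  refine ⟨Q, ⟨hQ.1, ?_⟩, hQ.2⟩
  intro Q' hQ' hsub
  have hQ'mem : Q' ∈ {Q : Set (Fin m) | G.IsClique Q ∧ s ⊆ Q} := ⟨hQ', hQ.2.trans hsub⟩
  have hcard := hmax (j := Q') hQ'mem (Set.ncard_le_ncard hsub (Set.toFinite _))
  exact (Set.eq_of_subset_of_ncard_le hsub hcard.ge (Set.toFinite _)).symm

/-- A finite graph `G` is an interval graph iff its clique
matrix has the consecutive ones property. -/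
theorem stmt0 {m l : ℕ} (G : SimpleGraph (Fin m)) (N : Fin m → Fin l → Bool)
    (hN : IsCliqueMatrix G N) :
    IsIntervalGraph G ↔ HasCOP N := by
  have hcol : ∀ j : Fin l, IsMaximalClique G {i | N i j = true} :=
    fun j => (hN.2 _).mpr ⟨j, rfl⟩
  constructor
  · -- interval graph → COP
    rintro ⟨I, hI, hG⟩
    have hpt : ∀ j : Fin l, ∃ x : ℝ, ∀ v, N v j = true → x ∈ I v := by
      intro j
      by_cases h : ∃ v0, N v0 j = true
      · obtain ⟨v0, hv0⟩ := h
        have hcl : G.IsClique {i | N i j = true} := (hcol j).1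
        have hinter : ∀ u v : Fin m, N u j = true → N v j = true →
            (I u ∩ I v).Nonempty := by
          intro u v hu hv
          by_cases huv : u = v
          · subst huv
            obtain ⟨x, hx⟩ := (hI u).1
            exact ⟨x, hx, hx⟩
          · exact (hG u v huv).mp (hcl hu hv huv)
        obtain ⟨x, hxT, hxs⟩ := helly_aux I
          (Finset.univ.filter (fun v => N v j = true))
          (fun v _ => (hI v).2)
          (fun u hu v hv => hinter u v (Finset.mem_filter.mp hu).2
            (Finset.mem_filter.mp hv).2)
          (I v0) (hI v0).2 (hI v0).1
          (fun v hv => hinter v0 v hv0 (Finset.mem_filter.mp hv).2)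
        exact ⟨x, fun v hv => hxs v (Finset.mem_filter.mpr ⟨Finset.mem_univ _, hv⟩)⟩
      · exact ⟨0, fun v hv => absurd ⟨v, hv⟩ h⟩
    choose t ht using hpt
    refine ⟨Tuple.sort t, ?_⟩
    intro i a b c hab hbc hA hC
    set σ := Tuple.sort t with hσdef
    have hmono := Tuple.monotone_sort t
    have h1 : t (σ a) ≤ t (σ b) := hmono hab
    have h2 : t (σ b) ≤ t (σ c) := hmono hbc
    have hia : t (σ a) ∈ I i := ht (σ a) i hA
    have hic : t (σ c) ∈ I i := ht (σ c) i hC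
    have hib : t (σ b) ∈ I i :=
      ordConnected_mem_of_between (hI i).2 hia hic
        (le_trans (min_le_left _ _) h1) (le_trans h2 (le_max_right _ _))
    have hmaxQ := hcol (σ b)
    have hclique : G.IsClique (insert i {v | N v (σ b) = true}) := by
      refine hmaxQ.1.insert ?_
      intro v hv hne
      exact (hG i v hne).mpr ⟨t (σ b), hib, ht (σ b) v hv⟩
    have heq := hmaxQ.2 _ hclique (Set.subset_insert _ _)
    have : i ∈ {v | N v (σ b) = true} := heq ▸ Set.mem_insert i _
    exact this
  · -- COP → interval graph
    rintro ⟨σ, hσ⟩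
    have hrow : ∀ i : Fin m,
        (Finset.univ.filter (fun p : Fin l => N i (σ p) = true)).Nonempty := by
      intro i
      obtain ⟨Q, hQ, hiQ⟩ := exists_maximal_clique G (G.isClique_singleton i)
      obtain ⟨j, hj⟩ := (hN.2 Q).mp hQ
      have hij : N i j = true := by
        have := hiQ (Set.mem_singleton i); rw [hj] at this; exact this
      exact ⟨σ.symm j, Finset.mem_filter.mpr ⟨Finset.mem_univ _, by simpa using hij⟩⟩
    set P : Fin m → Finset (Fin l) :=
      fun i => Finset.univ.filter (fun p => N i (σ p) = true) with hP
    set a : Fin m → Fin l := fun i => (P i).min' (hrow i) with ha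
    set b : Fin m → Fin l := fun i => (P i).max' (hrow i) with hb
    have hmem_a : ∀ i, N i (σ (a i)) = true :=
      fun i => (Finset.mem_filter.mp ((P i).min'_mem (hrow i))).2
    have hmem_b : ∀ i, N i (σ (b i)) = true :=
      fun i => (Finset.mem_filter.mp ((P i).max'_mem (hrow i))).2
    have hab : ∀ i, a i ≤ b i :=
      fun i => (P i).min'_le _ ((P i).max'_mem (hrow i))
    refine ⟨fun i => Set.Icc (((a i : ℕ) : ℝ)) (((b i : ℕ) : ℝ)), ?_, ?_⟩
    · intro i
      refine ⟨Set.nonempty_Icc.mpr ?_, Set.ordConnected_Icc⟩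
      exact_mod_cast (hab i : (a i : ℕ) ≤ (b i : ℕ))
    · intro u v huv
      constructor
      · intro hadj
        have hpair : G.IsClique {u, v} :=
          SimpleGraph.isClique_pair.mpr (fun _ => hadj)
        obtain ⟨Q, hQ, hsub⟩ := exists_maximal_clique G hpair
        obtain ⟨j, hj⟩ := (hN.2 Q).mp hQ
        have hu : N u j = true := by
          have := hsub (Set.mem_insert u {v}); rw [hj] at this; exact this
        have hv : N v j = true := by
          have := hsub (Set.mem_insert_of_mem u rfl); rw [hj] at this; exact this
        set p : Fin l := σ.symm j with hp
        have hpu : p ∈ P u := Finset.mem_filter.mpr ⟨Finset.mem_univ _, by simpa [hp] using hu⟩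
        have hpv : p ∈ P v := Finset.mem_filter.mpr ⟨Finset.mem_univ _, by simpa [hp] using hv⟩
        refine ⟨((p : ℕ) : ℝ), ⟨?_, ?_⟩, ?_, ?_⟩
        · exact_mod_cast ((P u).min'_le _ hpu : (a u : ℕ) ≤ (p : ℕ))
        · exact_mod_cast ((P u).le_max' _ hpu : (p : ℕ) ≤ (b u : ℕ))
        · exact_mod_cast ((P v).min'_le _ hpv : (a v : ℕ) ≤ (p : ℕ))
        · exact_mod_cast ((P v).le_max' _ hpv : (p : ℕ) ≤ (b v : ℕ))
      · rintro ⟨x, ⟨hxu1, hxu2⟩, hxv1, hxv2⟩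
        have havbu : a v ≤ b u := by
          have : ((a v : ℕ) : ℝ) ≤ ((b u : ℕ) : ℝ) := le_trans hxv1 hxu2
          exact_mod_cast this
        have haubv : a u ≤ b v := by
          have : ((a u : ℕ) : ℝ) ≤ ((b v : ℕ) : ℝ) := le_trans hxu1 hxv2
          exact_mod_cast this
        set p : Fin l := max (a u) (a v) with hp
        have hpu : N u (σ p) = true :=
          hσ u (a u) p (b u) (le_max_left _ _) (max_le (hab u) havbu)
            (hmem_a u) (hmem_b u)
        have hpv : N v (σ p) = true :=
          hσ v (a v) p (b v) (le_max_right _ _) (max_le haubv (hab v))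
            (hmem_a v) (hmem_b v)
        exact (hcol (σ p)).1 hpu hpv huv
end

section
/- If a binary matrix M has the consecutive ones property, then for every triple of pairwise intersecting sets S_a, S_b, S_c in the set system S(M), one of the three sets is contained in the union of the other two. -/
/-- If `M` has the consecutive ones property, then for every
triple of pairwise intersecting row sets, one of them is contained in the
union of the other two. -/
theorem stmt5 {m n : ℕ} (M : Fin m → Fin n → Bool) (h : HasCOP M)
    (ra rb rc : Fin m)
    (hab : (rowSet M ra ∩ rowSet M rb).Nonempty)
    (hac : (rowSet M ra ∩ rowSet M rc).Nonempty)
    (hbc : (rowSet M rb ∩ rowSet M rc).Nonempty) :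
    rowSet M ra ⊆ rowSet M rb ∪ rowSet M rc ∨
    rowSet M rb ⊆ rowSet M ra ∪ rowSet M rc ∨
    rowSet M rc ⊆ rowSet M ra ∪ rowSet M rb := by
  obtain ⟨σ, hσ⟩ := h
  have key : ∀ (i k : Fin m), (rowSet M i ∩ rowSet M k).Nonempty →
      ∀ x y z : Fin n, x ≤ y → y ≤ z → σ x ∈ rowSet M i → σ z ∈ rowSet M k →
      σ y ∉ rowSet M i → σ y ∉ rowSet M k → False := by
    intro i k hik x y z hxy hyz hx hz hyi hyk
    obtain ⟨p, hpi, hpk⟩ := hik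
    rcases le_total (σ.symm p) y with hp | hp
    · exact hyk (hσ k (σ.symm p) y z hp hyz (by simpa [rowSet] using hpk) hz)
    · exact hyi (hσ i x y (σ.symm p) hxy hp hx (by simpa [rowSet] using hpi))
  by_contra hcon
  push_neg at hcon
  obtain ⟨hna, hnb, hnc⟩ := hcon
  obtain ⟨x, hxa, hx'⟩ := Set.not_subset.mp hna
  obtain ⟨y, hyb, hy'⟩ := Set.not_subset.mp hnb
  obtain ⟨z, hzc, hz'⟩ := Set.not_subset.mp hnc
  simp only [Set.mem_union, not_or] at hx' hy' hz'
  obtain ⟨hxb, hxc⟩ := hx'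
  obtain ⟨hya, hyc⟩ := hy'
  obtain ⟨hza, hzb⟩ := hz'
  set x' := σ.symm x with hx'def
  set y' := σ.symm y with hy'def
  set z' := σ.symm z with hz'def
  have ex : σ x' = x := σ.apply_symm_apply x
  have ey : σ y' = y := σ.apply_symm_apply y
  have ez : σ z' = z := σ.apply_symm_apply z
  rcases le_total x' y' with h1 | h1 <;> rcases le_total y' z' with h2 | h2 <;>
    rcases le_total x' z' with h3 | h3
  -- x' ≤ y' ≤ z' : median y'
  · exact key ra rc hac x' y' z' h1 h2 (ex ▸ hxa) (ez ▸ hzc) (ey ▸ hya) (ey ▸ hyc)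
  · exact key ra rc hac x' y' z' h1 h2 (ex ▸ hxa) (ez ▸ hzc) (ey ▸ hya) (ey ▸ hyc)
  -- x' ≤ y', z' ≤ y', x' ≤ z' : median z'
  · exact key ra rb hab x' z' y' h3 h2 (ex ▸ hxa) (ey ▸ hyb) (ez ▸ hza) (ez ▸ hzb)
  -- x' ≤ y', z' ≤ y', z' ≤ x' : median x'
  · have hcb : (rowSet M rc ∩ rowSet M rb).Nonempty := by rwa [Set.inter_comm]
    exact key rc rb hcb z' x' y' h3 h1 (ez ▸ hzc) (ey ▸ hyb) (ex ▸ hxc) (ex ▸ hxb)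
  · exact key rb rc hbc y' x' z' h1 h3 (ey ▸ hyb) (ez ▸ hzc) (ex ▸ hxb) (ex ▸ hxc)
  · exact key rb ra (by rwa [Set.inter_comm] at hab) y' z' x' h2 h3 (ey ▸ hyb) (ex ▸ hxa) (ez ▸ hzb) (ez ▸ hza)
  · exact key rc ra (by rwa [Set.inter_comm] at hac) z' y' x' h2 h1 (ez ▸ hzc) (ex ▸ hxa) (ey ▸ hyc) (ey ▸ hya)
  · exact key rc ra (by rwa [Set.inter_comm] at hac) z' y' x' h2 h1 (ez ▸ hzc) (ex ▸ hxa) (ey ▸ hyc) (ey ▸ hya)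
end
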